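/- Fix t > 0 and α ∈ [a, b]. (Existence) There exists a triple (η, v, l), with v ∈ L¹_loc([0,∞); ℝ) and (η, l) solving the Skorokhod problem on [a, b] with driver v and initial point α, such that ∫₀ᵗ L̃(η(s), v(s)) ds = 0. (Uniqueness) If (η, v, l) and (η̃, ṽ, l̃) are two such triples, each solving the Skorokhod problem on [a, b] with initial point α and having zero action ∫₀ᵗ L̃(η(s), v(s)) ds = 0 = ∫₀ᵗ L̃(η̃(s), ṽ(s)) ds, then η(s) = η̃(s) for all s ∈ [0, t]. -/

import Mathlib

open MeasureTheory

open Set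

noncomputable section

/-- The outward "normal" of the interval `[a, b]`: `−1` at `a`, `1` at `b`
(and `0` in the interior, where the reflection term vanishes anyway). -/
def bdryNormal (a b x : ℝ) : ℝ := if x = a then -1 else if x = b then 1 else 0

/-- `(η, l)` solves the Skorokhod problem on `[a, b]` with driver `v` and initial
point `α`: `η` is (locally absolutely) continuous with `η(0) = α`, given in
integral form by `η(s) = α + ∫₀ˢ (v − l·n(η))`, stays in `[a, b]`, `l ≥ 0` a.e.,
and `l = 0` a.e. on `{a < η < b}`. -/
def SkorokhodSol (a b α : ℝ) (v η l : ℝ → ℝ) : Prop :=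
  η 0 = α ∧
  (∀ s ∈ Set.Ici (0:ℝ), η s ∈ Set.Icc a b) ∧
  MeasureTheory.LocallyIntegrableOn l (Set.Ici 0) MeasureTheory.volume ∧
  (∀ᵐ s ∂(MeasureTheory.volume.restrict (Set.Ici (0:ℝ))), 0 ≤ l s) ∧
  (∀ s ∈ Set.Ici (0:ℝ),
    η s = α + ∫ τ in (0:ℝ)..s, (v τ - l τ * bdryNormal a b (η τ))) ∧
  (∀ᵐ s ∂(MeasureTheory.volume.restrict (Set.Ici (0:ℝ))),
    η s ∈ Set.Ioo a b → l s = 0)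

/-- The Hamiltonian `H̃(α,p) = Φ̃⁺(α)(eᵖ−1) + Φ̃⁻(α)(e⁻ᵖ−1)`. -/
def Ham1 (Φp Φm : ℝ → ℝ) (α p : ℝ) : ℝ :=
  Φp α * (Real.exp p - 1) + Φm α * (Real.exp (-p) - 1)

/-- The Lagrangian `L̃(α,w) = sup_p (p·w − H̃(α,p))`. -/
def Lag1 (Φp Φm : ℝ → ℝ) (α w : ℝ) : ℝ :=
  sSup (Set.range fun p : ℝ => p * w - Ham1 Φp Φm α p)

/-- clamp to [a,b] -/
def clampI (a b x : ℝ) : ℝ := max a (min x b)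

lemma clampI_mem {a b : ℝ} (hab : a ≤ b) (x : ℝ) : clampI a b x ∈ Set.Icc a b := by
  constructor
  · exact le_max_left _ _
  · exact max_le hab (min_le_right _ _)

lemma clampI_eq_self {a b x : ℝ} (hx : x ∈ Set.Icc a b) : clampI a b x = x := by
  rcases hx with ⟨h1, h2⟩
  simp [clampI, min_eq_left h2, max_eq_right h1]

lemma clampI_of_lt {a b x : ℝ} (hab : a ≤ b) (hx : b < x) : clampI a b x = b := by
  simp [clampI, min_eq_right hx.le, max_eq_right hab]

lemma clampI_of_gt {a b x : ℝ} (hx : x < a) : clampI a b x = a := by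
  rcases le_total x b with h | h
  · simp [clampI, min_eq_left h, max_eq_left hx.le]
  · simp [clampI, min_eq_right h, max_eq_left (by linarith : b ≤ a)]

lemma lipschitzWith_clampI (a b : ℝ) : LipschitzWith 1 (clampI a b) := by
  refine LipschitzWith.of_dist_le_mul fun x y => ?_
  rw [Real.dist_eq, Real.dist_eq]
  push_cast
  rw [one_mul]
  unfold clampI
  refine le_trans (abs_max_sub_max_le_max _ _ _ _) ?_
  have h1 : |min x b - min y b| ≤ max |x - y| |b - b| := abs_min_sub_min_le_max _ _ _ _
  simp only [sub_self, abs_zero] at h1 ⊢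
  simp only [max_le_iff]
  exact ⟨abs_nonneg _, le_trans h1 (by simp [abs_nonneg])⟩

lemma abs_bdryNormal_le (a b x : ℝ) : |bdryNormal a b x| ≤ 1 := by
  unfold bdryNormal
  split_ifs <;> norm_num

/-- quadratic lower bound for exp on nonneg reals -/
lemma exp_ge_quad {p : ℝ} (hp : 0 ≤ p) : 1 + p ^ 2 / 2 ≤ Real.exp p := by
  have h := Real.sum_le_exp_of_nonneg hp 3
  have : ∑ i ∈ Finset.range 3, p ^ i / (Nat.factorial i) = 1 + p + p^2/2 := by
    simp [Finset.sum_range_succ, Nat.factorial]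
  rw [this] at h
  nlinarith

/-- lower bound on the Hamiltonian -/
lemma ham_lower {Φp Φm : ℝ → ℝ} {c0 x : ℝ} (hc0 : 0 < c0)
    (hp : c0 ≤ Φp x) (hm : c0 ≤ Φm x) (p : ℝ) :
    c0 * p ^ 2 / 2 - (Φp x + Φm x) ≤ Ham1 Φp Φm x p := by
  rcases le_total 0 p with h | h
  · have h1 : (1:ℝ) + p^2/2 ≤ Real.exp p := exp_ge_quad h
    have h2 : 0 ≤ Real.exp p - 1 := by nlinarith
    have h3 : Φp x * (Real.exp p - 1) ≥ c0 * (Real.exp p - 1) := by nlinarith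
    have h4 : Real.exp (-p) - 1 ≥ -1 := by have := Real.exp_pos (-p); linarith
    have h5 : Φm x * (Real.exp (-p) - 1) ≥ -(Φm x) := by nlinarith
    unfold Ham1; nlinarith
  · have h1 : (1:ℝ) + (-p)^2/2 ≤ Real.exp (-p) := exp_ge_quad (by linarith)
    have h2 : 0 ≤ Real.exp (-p) - 1 := by nlinarith
    have h3 : Φm x * (Real.exp (-p) - 1) ≥ c0 * (Real.exp (-p) - 1) := by nlinarith
    have h4 : Real.exp p - 1 ≥ -1 := by have := Real.exp_pos p; linarith
    have h5 : Φp x * (Real.exp p - 1) ≥ -(Φp x) := by nlinarith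
    unfold Ham1; nlinarith

lemma lag_bddAbove {Φp Φm : ℝ → ℝ} {c0 x : ℝ} (hc0 : 0 < c0)
    (hp : c0 ≤ Φp x) (hm : c0 ≤ Φm x) (w : ℝ) :
    BddAbove (Set.range fun p : ℝ => p * w - Ham1 Φp Φm x p) := by
  refine ⟨w ^ 2 / (2 * c0) + (Φp x + Φm x), ?_⟩
  rintro y ⟨p, rfl⟩
  have h1 := ham_lower hc0 hp hm p
  have h2 : p * w ≤ c0 * p ^ 2 / 2 + w ^ 2 / (2 * c0) := by
    have h3 : 0 ≤ (c0 * p - w)^2 := sq_nonneg _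
    have h4 : 0 < 2 * c0 := by linarith
    rw [div_add_div _ _ (by linarith : (2:ℝ) ≠ 0) (by linarith : 2 * c0 ≠ 0)]
    rw [le_div_iff₀ (by nlinarith)]
    nlinarith
  simp only
  linarith

lemma lag_nonneg {Φp Φm : ℝ → ℝ} {c0 x : ℝ} (hc0 : 0 < c0)
    (hp : c0 ≤ Φp x) (hm : c0 ≤ Φm x) (w : ℝ) : 0 ≤ Lag1 Φp Φm x w := by
  have h0 : (0:ℝ) ∈ Set.range fun p : ℝ => p * w - Ham1 Φp Φm x p :=
    ⟨0, by simp [Ham1]⟩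
  exact le_csSup (lag_bddAbove hc0 hp hm w) h0

/-- zero action along the drift -/
lemma lag_drift_eq_zero {Φp Φm : ℝ → ℝ} {x : ℝ}
    (hp : 0 ≤ Φp x) (hm : 0 ≤ Φm x) :
    Lag1 Φp Φm x (Φp x - Φm x) = 0 := by
  have hle : ∀ y ∈ Set.range fun p : ℝ => p * (Φp x - Φm x) - Ham1 Φp Φm x p, y ≤ 0 := by
    rintro y ⟨p, rfl⟩
    have h1 : p + 1 ≤ Real.exp p := Real.add_one_le_exp p
    have h2 : -p + 1 ≤ Real.exp (-p) := Real.add_one_le_exp (-p)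
    simp only [Ham1]
    nlinarith
  have h1 : Lag1 Φp Φm x (Φp x - Φm x) ≤ 0 :=
    Real.sSup_le hle le_rfl
  have h2 : 0 ≤ Lag1 Φp Φm x (Φp x - Φm x) :=
    le_csSup ⟨0, hle⟩ ⟨0, by simp [Ham1]⟩
  linarith

lemma hasDerivAt_ham (Φp Φm : ℝ → ℝ) (x w : ℝ) :
    HasDerivAt (fun p : ℝ => p * w - Ham1 Φp Φm x p)
      (w - (Φp x - Φm x)) 0 := by
  have h1 : HasDerivAt (fun p : ℝ => p * w) w 0 := by
    simpa using (hasDerivAt_id (0:ℝ)).mul_const w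
  have he : HasDerivAt (fun p : ℝ => Real.exp p - 1) 1 0 := by
    simpa using (Real.hasDerivAt_exp 0).sub_const 1
  have he' : HasDerivAt (fun p : ℝ => Real.exp (-p) - 1) (-1) 0 := by
    have : HasDerivAt (fun p : ℝ => Real.exp (-p)) (-1) 0 := by
      have h := (Real.hasDerivAt_exp (-(0:ℝ))).comp 0 ((hasDerivAt_id (0:ℝ)).neg)
      exact h.congr_deriv (by simp)
    simpa using this.sub_const 1
  have h2 : HasDerivAt (fun p : ℝ => Ham1 Φp Φm x p) (Φp x - Φm x) 0 := by
    have := ((he.const_mul (Φp x)).add (he'.const_mul (Φm x)))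
    unfold Ham1
    exact this.congr_deriv (by ring)
  exact h1.sub h2

/-- if the Lagrangian vanishes, the velocity is the drift -/
lemma lag_eq_zero_imp {Φp Φm : ℝ → ℝ} {c0 x : ℝ} (hc0 : 0 < c0)
    (hp : c0 ≤ Φp x) (hm : c0 ≤ Φm x) {w : ℝ}
    (h : Lag1 Φp Φm x w = 0) : w = Φp x - Φm x := by
  by_contra hne
  set ψ := fun p : ℝ => p * w - Ham1 Φp Φm x p with hψ
  have hψ0 : ψ 0 = 0 := by simp [hψ, Ham1]
  have hd : HasDerivAt ψ (w - (Φp x - Φm x)) 0 := hasDerivAt_ham Φp Φm x w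
  set d := w - (Φp x - Φm x) with hdd
  have hdne : d ≠ 0 := sub_ne_zero.mpr hne
  -- find p with ψ p > 0
  have hslope : Filter.Tendsto (slope ψ 0) (nhdsWithin 0 {(0:ℝ)}ᶜ) (nhds d) :=
    hasDerivAt_iff_tendsto_slope.mp hd
  have hex : ∃ p : ℝ, 0 < ψ p := by
    rcases lt_or_gt_of_ne hdne with hneg | hpos
    · have h2 : ∀ᶠ p in nhdsWithin 0 {(0:ℝ)}ᶜ, slope ψ 0 p < d / 2 :=
        hslope.eventually_lt_const (by linarith)
      have h3 : ∀ᶠ p in nhdsWithin (0:ℝ) (Set.Iio 0), slope ψ 0 p < d / 2 :=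
        h2.filter_mono (nhdsWithin_mono 0 (fun y hy => ne_of_lt hy))
      rcases (h3.and eventually_mem_nhdsWithin).exists with ⟨p, hp3, hp4⟩
      refine ⟨p, ?_⟩
      rw [slope_def_field] at hp3
      have hpne : p - 0 ≠ 0 := by simpa using ne_of_lt hp4
      have hplt : p < 0 := hp4
      have key : ψ p - 0 = ((ψ p - 0) / (p - 0)) * (p - 0) := (div_mul_cancel₀ _ hpne).symm
      rw [hψ0] at hp3
      have hq : (ψ p - 0) / (p - 0) < 0 := lt_trans hp3 (by linarith)
      have hpr : 0 < (ψ p - 0) / (p - 0) * (p - 0) :=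
        mul_pos_of_neg_of_neg hq (by linarith)
      rw [← key] at hpr
      linarith
    · have h2 : ∀ᶠ p in nhdsWithin 0 {(0:ℝ)}ᶜ, d / 2 < slope ψ 0 p :=
        hslope.eventually_const_lt (by linarith)
      have h3 : ∀ᶠ p in nhdsWithin (0:ℝ) (Set.Ioi 0), d / 2 < slope ψ 0 p :=
        h2.filter_mono (nhdsWithin_mono 0 (fun y hy => ne_of_gt hy))
      rcases (h3.and eventually_mem_nhdsWithin).exists with ⟨p, hp3, hp4⟩
      refine ⟨p, ?_⟩
      rw [slope_def_field] at hp3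
      have hpne : p - 0 ≠ 0 := by simpa using ne_of_gt hp4
      have hpgt : (0:ℝ) < p := hp4
      have key : ψ p - 0 = ((ψ p - 0) / (p - 0)) * (p - 0) := (div_mul_cancel₀ _ hpne).symm
      rw [hψ0] at hp3
      have hq : 0 < (ψ p - 0) / (p - 0) := lt_trans (by linarith) hp3
      have hpr : 0 < (ψ p - 0) / (p - 0) * (p - 0) :=
        mul_pos hq (by linarith)
      rw [← key] at hpr
      linarith
  rcases hex with ⟨p, hp2⟩
  have : ψ p ≤ Lag1 Φp Φm x w :=
    le_csSup (lag_bddAbove hc0 hp hm w) ⟨p, rfl⟩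
  rw [h] at this
  linarith

/-- Global forward solution of an autonomous ODE with Lipschitz bounded RHS. -/
lemma exists_global_solution (f : ℝ → ℝ) (K : NNReal) (hf : LipschitzWith K f)
    (C : ℝ) (hC : ∀ x, ‖f x‖ ≤ C) (α : ℝ) :
    ∃ ξ : ℝ → ℝ, ξ 0 = α ∧ Continuous ξ ∧ (∀ s ≤ (0:ℝ), ξ s = α) ∧
      ∀ s : ℝ, 0 < s → HasDerivAt ξ (f (ξ s)) s := by
  have hC0 : 0 ≤ C := le_trans (norm_nonneg _) (hC α)
  have hpl : ∀ n : ℕ, IsPicardLindelof (fun (_ : ℝ) x => f x) (tmin := 0) (tmax := n)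
      ⟨0, le_rfl, Nat.cast_nonneg n⟩ α (⟨C, hC0⟩ * n) 0 ⟨C, hC0⟩ K := by
    intro n
    refine ⟨fun _ _ => hf.lipschitzOnWith, fun _ _ => continuousOn_const,
      fun _ _ x _ => hC x, ?_⟩
    simp [max_eq_left (Nat.cast_nonneg (α := ℝ) n)]
    exact le_of_eq (NNReal.coe_mul (⟨C, hC0⟩ : NNReal) (n : NNReal)).symm
  have hsol : ∀ n : ℕ, ∃ g : ℝ → ℝ, g 0 = α ∧
      ∀ s ∈ Icc (0:ℝ) n, HasDerivWithinAt g (f (g s)) (Icc 0 n) s :=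
    fun n => (hpl n).exists_eq_forall_mem_Icc_hasDerivWithinAt₀
  choose F hF0 hFd using hsol
  have hFc : ∀ n : ℕ, ContinuousOn (F n) (Icc (0:ℝ) n) :=
    fun n s hs => (hFd n s hs).continuousWithinAt
  have hFIci : ∀ n : ℕ, ∀ s ∈ Ico (0:ℝ) n,
      HasDerivWithinAt (F n) (f (F n s)) (Ici s) s := by
    intro n s hs
    have h := hFd n s ⟨hs.1, hs.2.le⟩
    have hmem : Icc (0:ℝ) n ∈ nhdsWithin s (Ici s) :=
      mem_nhdsWithin.mpr ⟨Iio n, isOpen_Iio, hs.2,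
        fun y hy => ⟨le_trans hs.1 hy.2, hy.1.le⟩⟩
    exact h.mono_of_mem_nhdsWithin hmem
  have hagree : ∀ (n m : ℕ) (s : ℝ), s ∈ Icc (0:ℝ) n → s ∈ Icc (0:ℝ) m →
      F n s = F m s := by
    suffices h : ∀ (n m : ℕ), n ≤ m → ∀ s ∈ Icc (0:ℝ) n, F n s = F m s by
      intro n m s hsn hsm
      rcases le_total n m with h1 | h1
      · exact h n m h1 s hsn
      · exact (h m n h1 s hsm).symm
    intro n m hnm s hs
    have hcast : (n:ℝ) ≤ m := Nat.cast_le.mpr hnm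
    have hv : ∀ τ ∈ Ico (0:ℝ) n, LipschitzOnWith K (fun x => f x) (Set.univ : Set ℝ) :=
      fun _ _ => hf.lipschitzOnWith
    exact ODE_solution_unique_of_mem_Icc_right hv
      (hFc n) (fun τ hτ => hFIci n τ hτ) (fun _ _ => trivial)
      ((hFc m).mono (Icc_subset_Icc le_rfl hcast))
      (fun τ hτ => hFIci m τ ⟨hτ.1, lt_of_lt_of_le hτ.2 hcast⟩)
      (fun _ _ => trivial) (by rw [hF0, hF0]) hs
  set ξ : ℝ → ℝ := fun s => F (⌈s⌉₊ + 1) (max s 0) with hξdef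
  have hle_ceil : ∀ s : ℝ, s ≤ ((⌈s⌉₊ + 1 : ℕ) : ℝ) := by
    intro s
    rcases le_total s 0 with h | h
    · exact le_trans h (Nat.cast_nonneg _)
    · push_cast
      exact le_trans (Nat.le_ceil s) (by linarith)
  have hξ_eq : ∀ s : ℝ, 0 ≤ s → ∀ n : ℕ, s ≤ n → ξ s = F n s := by
    intro s hs n hn
    have h1 : max s 0 = s := max_eq_left hs
    rw [hξdef]
    simp only [h1]
    exact hagree _ n s ⟨hs, hle_ceil s⟩ ⟨hs, hn⟩
  have hξ_neg : ∀ s ≤ (0:ℝ), ξ s = α := by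
    intro s hs
    have h1 : max s 0 = 0 := max_eq_right hs
    rw [hξdef]
    simp only [h1]
    exact hF0 _
  have hξ0 : ξ 0 = α := hξ_neg 0 le_rfl
  have hξd : ∀ s : ℝ, 0 < s → HasDerivAt ξ (f (ξ s)) s := by
    intro s hs
    set n : ℕ := ⌈s⌉₊ + 1 with hn
    have hsn : s < n := lt_of_le_of_lt (Nat.le_ceil s) (by push_cast [hn]; linarith)
    have hd : HasDerivAt (F n) (f (F n s)) s :=
      (hFd n s ⟨hs.le, hsn.le⟩).hasDerivAt (Icc_mem_nhds hs hsn)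
    have hev : F n =ᶠ[nhds s] ξ :=
      Filter.eventuallyEq_of_mem (Ioo_mem_nhds hs hsn)
        (fun τ hτ => (hξ_eq τ hτ.1.le n hτ.2.le).symm)
    have := hd.congr_of_eventuallyEq hev.symm
    rwa [hξ_eq s hs.le n hsn.le]
  refine ⟨ξ, hξ0, ?_, hξ_neg, hξd⟩
  rw [continuous_iff_continuousAt]
  intro s
  rcases lt_trichotomy s 0 with hs | hs | hs
  · have hev : (fun _ : ℝ => α) =ᶠ[nhds s] ξ :=
      Filter.eventuallyEq_of_mem (Iio_mem_nhds hs) (fun τ hτ => (hξ_neg τ (le_of_lt hτ)).symm)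
    exact continuousAt_const.congr hev
  · subst hs
    have h1 : ContinuousWithinAt ξ (Iic 0) 0 := by
      refine continuousWithinAt_const.congr (fun y hy => hξ_neg y hy) (hξ_neg 0 le_rfl)
    have h3 : ContinuousWithinAt (F 1) (Ici 0 ∩ Iio 1) 0 := by
      refine (hFc 1 0 ⟨le_rfl, by norm_num⟩).mono ?_
      intro y hy
      exact ⟨hy.1, by exact_mod_cast hy.2.le⟩
    have h3' : ContinuousWithinAt ξ (Ici 0 ∩ Iio 1) 0 := by
      refine h3.congr (fun y hy => hξ_eq y hy.1 1 (by exact_mod_cast hy.2.le)) ?_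
      exact hξ_eq 0 le_rfl 1 (by norm_num)
    have h4 : ContinuousWithinAt ξ (Ici 0) 0 :=
      (continuousWithinAt_inter (Iio_mem_nhds one_pos)).mp h3'
    have h5 : ContinuousWithinAt ξ (Iic 0 ∪ Ici 0) 0 := h1.union h4
    rwa [Iic_union_Ici, continuousWithinAt_univ] at h5
  · exact (hξd s hs).continuousAt

section invariance

variable {f ξ : ℝ → ℝ} {b : ℝ}

/-- if the solution exceeds `b` and `f` is constant above `b`, then `f b > 0` -/
lemma escape_pos (hcont : Continuous ξ)
    (hd : ∀ s : ℝ, 0 < s → HasDerivAt ξ (f (ξ s)) s)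
    (hconst : ∀ x, b < x → f x = f b)
    (hξ0 : ξ 0 ≤ b) {s₀ : ℝ} (hs₀ : 0 ≤ s₀) (h : b < ξ s₀) : 0 < f b := by
  have hs₀0 : 0 < s₀ := by
    rcases eq_or_lt_of_le hs₀ with h1 | h1
    · exfalso; rw [← h1] at h; linarith
    · exact h1
  set E := Icc 0 s₀ ∩ ξ ⁻¹' (Iic b) with hE
  have hEc : IsClosed E := isClosed_Icc.inter (isClosed_Iic.preimage hcont)
  have hEne : E.Nonempty := ⟨0, ⟨le_rfl, hs₀⟩, hξ0⟩
  have hEbdd : BddAbove E := ⟨s₀, fun x hx => hx.1.2⟩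
  set u := sSup E with hu
  have huE : u ∈ E := hEc.csSup_mem hEne hEbdd
  have hub : ξ u ≤ b := huE.2
  have hu0 : 0 ≤ u := huE.1.1
  have hus : u ≤ s₀ := huE.1.2
  have huslt : u < s₀ := by
    rcases eq_or_lt_of_le hus with h1 | h1
    · exfalso; rw [h1] at hub; linarith
    · exact h1
  have hgt : ∀ τ ∈ Ioc u s₀, b < ξ τ := by
    intro τ hτ
    by_contra hc
    push_neg at hc
    have : τ ∈ E := ⟨⟨le_trans hu0 hτ.1.le, hτ.2⟩, hc⟩
    exact absurd (le_csSup hEbdd this) (not_le.mpr hτ.1)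
  obtain ⟨c, hc, hceq⟩ := exists_hasDerivAt_eq_slope ξ (fun τ => f (ξ τ)) huslt
    (hcont.continuousOn)
    (fun τ hτ => hd τ (lt_of_le_of_lt hu0 hτ.1))
  have hcb : b < ξ c := hgt c ⟨hc.1, hc.2.le⟩
  have : f (ξ c) = f b := hconst _ hcb
  rw [this] at hceq
  rw [hceq]
  apply div_pos <;> linarith [hgt s₀ ⟨huslt, le_rfl⟩]

/-- forward invariance of `{ξ > b}` -/
lemma stay_pos (hcont : Continuous ξ)
    (hd : ∀ s : ℝ, 0 < s → HasDerivAt ξ (f (ξ s)) s)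
    (hconst : ∀ x, b < x → f x = f b)
    (hξ0 : ξ 0 ≤ b) {s₀ : ℝ} (hs₀ : 0 ≤ s₀) (h : b < ξ s₀) :
    ∀ s, s₀ ≤ s → b < ξ s := by
  have hfb : 0 < f b := escape_pos hcont hd hconst hξ0 hs₀ h
  intro s hs
  rcases eq_or_lt_of_le hs with h1 | h1
  · rwa [← h1]
  by_contra hc
  push_neg at hc
  set E := Icc s₀ s ∩ ξ ⁻¹' (Iic b) with hE
  have hEc : IsClosed E := isClosed_Icc.inter (isClosed_Iic.preimage hcont)
  have hEne : E.Nonempty := ⟨s, ⟨hs, le_rfl⟩, hc⟩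
  have hEbdd : BddBelow E := ⟨s₀, fun x hx => hx.1.1⟩
  set u := sInf E with hu
  have huE : u ∈ E := hEc.csInf_mem hEne hEbdd
  have hub : ξ u ≤ b := huE.2
  have hu1 : s₀ ≤ u := huE.1.1
  have hult : s₀ < u := by
    rcases eq_or_lt_of_le hu1 with h2 | h2
    · exfalso; rw [← h2] at hub; linarith
    · exact h2
  have hgt : ∀ τ ∈ Ico s₀ u, b < ξ τ := by
    intro τ hτ
    by_contra hcc
    push_neg at hcc
    have : τ ∈ E := ⟨⟨hτ.1, le_trans hτ.2.le (huE.1.2)⟩, hcc⟩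
    exact absurd (csInf_le hEbdd this) (not_le.mpr hτ.2)
  obtain ⟨c, hcmem, hceq⟩ := exists_hasDerivAt_eq_slope ξ (fun τ => f (ξ τ)) hult
    (hcont.continuousOn)
    (fun τ hτ => hd τ (lt_of_le_of_lt hs₀ hτ.1))
  have hcb : b < ξ c := hgt c ⟨hcmem.1.le, hcmem.2⟩
  rw [hconst _ hcb] at hceq
  have hlt : (ξ u - ξ s₀) / (u - s₀) < 0 :=
    div_neg_of_neg_of_pos (by linarith) (by linarith)
  rw [hceq] at hfb
  linarith

/-- if the solution goes below `a` and `f` is constant below `a`, then `f a < 0` -/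
lemma escape_neg {a : ℝ} (hcont : Continuous ξ)
    (hd : ∀ s : ℝ, 0 < s → HasDerivAt ξ (f (ξ s)) s)
    (hconst : ∀ x, x < a → f x = f a)
    (hξ0 : a ≤ ξ 0) {s₀ : ℝ} (hs₀ : 0 ≤ s₀) (h : ξ s₀ < a) : f a < 0 := by
  have key : 0 < (fun y => -f (-y)) (-a) := by
    refine escape_pos (f := fun y => -f (-y)) (b := -a) (hcont.neg) ?_ ?_ (by simpa using hξ0)
      hs₀ (by simpa using h)
    · intro s hs
      have h1 := (hd s hs).neg
      have h2 : -f (ξ s) = -f (-(-ξ s)) := by ring_nf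
      rw [h2] at h1
      exact h1
    · intro x hx
      simp only [neg_neg]
      have : -x < a := by linarith
      rw [hconst _ this]
  simpa using key

/-- forward invariance of `{ξ < a}` -/
lemma stay_neg {a : ℝ} (hcont : Continuous ξ)
    (hd : ∀ s : ℝ, 0 < s → HasDerivAt ξ (f (ξ s)) s)
    (hconst : ∀ x, x < a → f x = f a)
    (hξ0 : a ≤ ξ 0) {s₀ : ℝ} (hs₀ : 0 ≤ s₀) (h : ξ s₀ < a) :
    ∀ s, s₀ ≤ s → ξ s < a := by
  intro s hs
  have key := stay_pos (f := fun y => -f (-y)) (b := -a) (hcont.neg) ?_ ?_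
    (by simpa using hξ0) hs₀ (by simpa using h) s hs
  · simpa using key
  · intro τ hτ
    have h1 := (hd τ hτ).neg
    have h2 : -f (ξ τ) = -f (-(-ξ τ)) := by ring_nf
    rw [h2] at h1
    exact h1
  · intro x hx
    simp only [neg_neg]
    have : -x < a := by linarith
    rw [hconst _ this]

/-- FTC for the solution -/
lemma ftc_sol (hfc : Continuous f) (hcont : Continuous ξ)
    (hd : ∀ s : ℝ, 0 < s → HasDerivAt ξ (f (ξ s)) s)
    {s₁ s₂ : ℝ} (h0 : 0 ≤ s₁) (h12 : s₁ ≤ s₂) :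
    ∫ τ in s₁..s₂, f (ξ τ) = ξ s₂ - ξ s₁ := by
  refine intervalIntegral.integral_eq_sub_of_hasDeriv_right_of_le h12
    (hcont.continuousOn) (fun τ hτ => ?_) ?_
  · exact (hd τ (lt_of_le_of_lt h0 hτ.1)).hasDerivWithinAt
  · exact ((hfc.comp hcont)).intervalIntegrable _ _

end invariance

lemma locallyIntegrable_of_bound {f g : ℝ → ℝ} (hf : Measurable f) (hg : Continuous g)
    (h : ∀ x, ‖f x‖ ≤ g x) : MeasureTheory.LocallyIntegrable f MeasureTheory.volume := by
  rw [MeasureTheory.locallyIntegrable_iff]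
  intro K hK
  exact ((hg.continuousOn).integrableOn_compact hK).mono'
    hf.aestronglyMeasurable (Filter.Eventually.of_forall h)

lemma intervalIntegrable_of_bound {f g : ℝ → ℝ} (hf : Measurable f) (hg : Continuous g)
    (h : ∀ x, ‖f x‖ ≤ g x) (x y : ℝ) : IntervalIntegrable f volume x y := by
  rw [intervalIntegrable_iff]
  exact (MeasureTheory.locallyIntegrable_iff.mp
    (locallyIntegrable_of_bound hf hg h) _ isCompact_uIcc).mono_set
    Set.uIoc_subset_uIcc



lemma zero_action_exists
    (a b : ℝ) (hab : a < b)
    (Φp Φm : ℝ → ℝ) (Kp Km : NNReal)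
    (hΦpLip : LipschitzOnWith Kp Φp (Set.Icc a b))
    (hΦmLip : LipschitzOnWith Km Φm (Set.Icc a b))
    (c0 : ℝ) (hc0 : 0 < c0)
    (hΦp : ∀ x ∈ Set.Icc a b, c0 ≤ Φp x)
    (hΦm : ∀ x ∈ Set.Icc a b, c0 ≤ Φm x)
    (t : ℝ) (ht : 0 < t) (α : ℝ) (hα : α ∈ Set.Icc a b) :
    ∃ η v l : ℝ → ℝ,
      MeasureTheory.LocallyIntegrableOn v (Set.Ici 0) MeasureTheory.volume ∧
      SkorokhodSol a b α v η l ∧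
      IntervalIntegrable (fun s => Lag1 Φp Φm (η s) (v s)) MeasureTheory.volume 0 t ∧
      ∫ s in (0:ℝ)..t, Lag1 Φp Φm (η s) (v s) = 0 := by
  have hab' : a ≤ b := hab.le
  set Kr : NNReal := Kp + Km with hKr
  have hΦLip : LipschitzOnWith Kr (fun x => Φp x - Φm x) (Set.Icc a b) :=
    hΦpLip.sub hΦmLip
  set bb : ℝ → ℝ := fun x => Φp (clampI a b x) - Φm (clampI a b x) with hbb
  have hclamp_mem : ∀ x, clampI a b x ∈ Set.Icc a b := clampI_mem hab'
  have hbbLip : LipschitzWith Kr bb := by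
    have h1 : LipschitzOnWith (Kr * 1) ((fun x => Φp x - Φm x) ∘ clampI a b) Set.univ :=
      hΦLip.comp ((lipschitzWith_clampI a b).lipschitzOnWith) (fun x _ => hclamp_mem x)
    rw [mul_one, lipschitzOnWith_univ] at h1
    exact h1
  have hbbcont : Continuous bb := hbbLip.continuous
  set C : ℝ := |Φp α - Φm α| + (Kr:ℝ) * (b - a) with hC
  have hbbC : ∀ x, ‖bb x‖ ≤ C := by
    intro x
    have h0 : clampI a b α = α := clampI_eq_self hα
    have h1 : dist (bb x) (bb α) ≤ (Kr:ℝ) * dist (clampI a b x) (clampI a b α) :=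
      hΦLip.dist_le_mul _ (hclamp_mem x) _ (hclamp_mem α)
    have h2 : dist (clampI a b x) (clampI a b α) ≤ b - a := by
      rw [Real.dist_eq, abs_sub_le_iff]
      have u1 := hclamp_mem x
      have u2 := hclamp_mem α
      constructor <;> [linarith [u1.2, u2.1]; linarith [u1.1, u2.2]]
    have h3 : dist (bb x) (bb α) ≤ (Kr:ℝ) * (b - a) :=
      le_trans h1 (mul_le_mul_of_nonneg_left h2 (NNReal.coe_nonneg Kr))
    have h4 : |bb α| = |Φp α - Φm α| := by rw [hbb]; simp only [h0]
    calc ‖bb x‖ = |bb x| := rfl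
      _ ≤ |bb x - bb α| + |bb α| := by
          have := abs_sub_abs_le_abs_sub (bb x) (bb α); linarith [abs_sub_le (bb x) (bb α) 0]
      _ ≤ (Kr:ℝ) * (b - a) + |Φp α - Φm α| := by
          rw [h4]; gcongr; rw [← Real.dist_eq]; exact h3
      _ = C := by rw [hC]; ring
  obtain ⟨ξ, hξ0, hξc, hξneg, hξd⟩ := exists_global_solution bb Kr hbbLip C hbbC α
  have hbmem : b ∈ Set.Icc a b := ⟨hab', le_rfl⟩
  have hamem : a ∈ Set.Icc a b := ⟨le_rfl, hab'⟩
  have hconst_b : ∀ x, b < x → bb x = bb b := by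
    intro x hx
    rw [hbb]; simp only [clampI_of_lt hab' hx, clampI_eq_self hbmem]
  have hconst_a : ∀ x, x < a → bb x = bb a := by
    intro x hx
    rw [hbb]; simp only [clampI_of_gt hx, clampI_eq_self hamem]
  have hξ0le : ξ 0 ≤ b := by rw [hξ0]; exact hα.2
  have hξ0ge : a ≤ ξ 0 := by rw [hξ0]; exact hα.1
  have hside_b : ∀ s, 0 ≤ s → b < ξ s → ∀ τ, 0 ≤ τ → a ≤ ξ τ := by
    intro s hs hbs τ hτ
    by_contra hc; push_neg at hc
    rcases le_total s τ with h | h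
    · have := stay_pos hξc hξd hconst_b hξ0le hs hbs τ h; linarith
    · have := stay_neg hξc hξd hconst_a hξ0ge hτ hc s h; linarith
  have hside_a : ∀ s, 0 ≤ s → ξ s < a → ∀ τ, 0 ≤ τ → ξ τ ≤ b := by
    intro s hs has τ hτ
    by_contra hc; push_neg at hc
    rcases le_total s τ with h | h
    · have := stay_neg hξc hξd hconst_a hξ0ge hs has τ h; linarith
    · have := stay_pos hξc hξd hconst_b hξ0le hτ hc s h; linarith
  set η : ℝ → ℝ := fun s => clampI a b (ξ s) with hη_def
  set v : ℝ → ℝ := fun s => bb (ξ s) with hv_def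
  set l : ℝ → ℝ := fun s =>
    if b < ξ s then bb (ξ s) else if ξ s < a then -bb (ξ s) else 0 with hl_def
  set g : ℝ → ℝ := fun τ => if ξ τ ∈ Set.Icc a b then bb (ξ τ) else 0 with hg_def
  have hgmeas : Measurable g := by
    apply Measurable.ite ((isClosed_Icc.preimage hξc).measurableSet)
      (hbbcont.comp hξc).measurable measurable_const
  have hgbound : ∀ x, ‖g x‖ ≤ |bb (ξ x)| := by
    intro x; rw [hg_def]; simp only [Real.norm_eq_abs]
    split_ifs <;> simp [abs_nonneg]
  have hg_int : ∀ x y, IntervalIntegrable g volume x y :=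
    intervalIntegrable_of_bound hgmeas ((hbbcont.comp hξc).abs) hgbound
  -- the key integral identity
  have hkey : ∀ s, 0 ≤ s → clampI a b (ξ s) = α + ∫ τ in (0:ℝ)..s, g τ := by
    intro s hs
    by_cases hcase : ∀ τ, τ ∈ Set.Icc (0:ℝ) s → ξ τ ∈ Set.Icc a b
    · have h1 : ∫ τ in (0:ℝ)..s, g τ = ∫ τ in (0:ℝ)..s, bb (ξ τ) := by
        apply intervalIntegral.integral_congr
        intro τ hτ
        rw [Set.uIcc_of_le hs] at hτ
        rw [hg_def]; simp only [if_pos (hcase τ hτ)]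
      rw [h1, ftc_sol hbbcont hξc hξd le_rfl hs, hξ0,
        clampI_eq_self (hcase s ⟨hs, le_rfl⟩)]
      ring
    · push_neg at hcase
      obtain ⟨τ₀, hτ₀mem, hτ₀⟩ := hcase
      rcases lt_or_ge b (ξ τ₀) with hgtb | hleb
      · -- ξ exceeds b
        have hsgt : b < ξ s := stay_pos hξc hξd hconst_b hξ0le hτ₀mem.1 hgtb s hτ₀mem.2
        have hsa : ∀ τ, 0 ≤ τ → a ≤ ξ τ := hside_b τ₀ hτ₀mem.1 hgtb
        set E := Set.Icc 0 s ∩ ξ ⁻¹' (Set.Iic b) with hE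
        have hEc : IsClosed E := isClosed_Icc.inter (isClosed_Iic.preimage hξc)
        have hEne : E.Nonempty := ⟨0, ⟨le_rfl, hs⟩, hξ0le⟩
        have hEbdd : BddAbove E := ⟨s, fun x hx => hx.1.2⟩
        set u := sSup E with hu
        have huE : u ∈ E := hEc.csSup_mem hEne hEbdd
        have hub : ξ u ≤ b := huE.2
        have hu0 : 0 ≤ u := huE.1.1
        have hus : u ≤ s := huE.1.2
        have hult : u < s := by
          rcases eq_or_lt_of_le hus with h1 | h1
          · exfalso; rw [h1] at hub; linarith
          · exact h1
        have hIoc : ∀ τ ∈ Set.Ioc u s, b < ξ τ := by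
          intro τ hτ
          by_contra hcc; push_neg at hcc
          have : τ ∈ E := ⟨⟨le_trans hu0 hτ.1.le, hτ.2⟩, hcc⟩
          exact absurd (le_csSup hEbdd this) (not_le.mpr hτ.1)
        have hIcc : ∀ τ ∈ Set.Icc (0:ℝ) u, ξ τ ∈ Set.Icc a b := by
          intro τ hτ
          refine ⟨hsa τ hτ.1, ?_⟩
          by_contra hcc; push_neg at hcc
          have := stay_pos hξc hξd hconst_b hξ0le hτ.1 hcc u hτ.2
          linarith
        have hξu : ξ u = b := by
          refine le_antisymm hub ?_
          have T : Filter.Tendsto ξ (nhdsWithin u (Set.Ioi u)) (nhds (ξ u)) :=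
            (hξc.continuousWithinAt (s := Set.Ioi u) (x := u)).tendsto
          refine ge_of_tendsto T ?_
          exact Filter.eventually_of_mem (Ioc_mem_nhdsGT hult)
            (fun τ hτ => (hIoc τ hτ).le)
        have hsplit : (∫ τ in (0:ℝ)..u, g τ) + ∫ τ in u..s, g τ = ∫ τ in (0:ℝ)..s, g τ :=
          intervalIntegral.integral_add_adjacent_intervals (hg_int 0 u) (hg_int u s)
        have h1 : ∫ τ in (0:ℝ)..u, g τ = ξ u - α := by
          have he : ∫ τ in (0:ℝ)..u, g τ = ∫ τ in (0:ℝ)..u, bb (ξ τ) := by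
            apply intervalIntegral.integral_congr
            intro τ hτ
            rw [Set.uIcc_of_le hu0] at hτ
            rw [hg_def]; simp only [if_pos (hIcc τ hτ)]
          rw [he, ftc_sol hbbcont hξc hξd le_rfl hu0, hξ0]
        have h2 : ∫ τ in u..s, g τ = 0 := by
          rw [intervalIntegral.integral_of_le hult.le]
          have : ∫ τ in Set.Ioc u s, g τ = ∫ τ in Set.Ioc u s, (0:ℝ) := by
            apply MeasureTheory.setIntegral_congr_fun measurableSet_Ioc
            intro τ hτ
            rw [hg_def]
            exact if_neg (fun hmem => absurd hmem.2 (not_le.mpr (hIoc τ hτ)))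
          rw [this]; simp
        rw [clampI_of_lt hab' hsgt, ← hsplit, h1, h2, hξu]
        ring
      · -- ξ goes below a
        have hlta : ξ τ₀ < a := by
          by_contra hcc; push_neg at hcc
          exact hτ₀ ⟨hcc, hleb⟩
        have hslt : ξ s < a := stay_neg hξc hξd hconst_a hξ0ge hτ₀mem.1 hlta s hτ₀mem.2
        have hsb : ∀ τ, 0 ≤ τ → ξ τ ≤ b := hside_a τ₀ hτ₀mem.1 hlta
        set E := Set.Icc 0 s ∩ ξ ⁻¹' (Set.Ici a) with hE
        have hEc : IsClosed E := isClosed_Icc.inter (isClosed_Ici.preimage hξc)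
        have hEne : E.Nonempty := ⟨0, ⟨le_rfl, hs⟩, hξ0ge⟩
        have hEbdd : BddAbove E := ⟨s, fun x hx => hx.1.2⟩
        set u := sSup E with hu
        have huE : u ∈ E := hEc.csSup_mem hEne hEbdd
        have hub : a ≤ ξ u := huE.2
        have hu0 : 0 ≤ u := huE.1.1
        have hus : u ≤ s := huE.1.2
        have hult : u < s := by
          rcases eq_or_lt_of_le hus with h1 | h1
          · exfalso; rw [h1] at hub; linarith
          · exact h1
        have hIoc : ∀ τ ∈ Set.Ioc u s, ξ τ < a := by
          intro τ hτ
          by_contra hcc; push_neg at hcc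
          have : τ ∈ E := ⟨⟨le_trans hu0 hτ.1.le, hτ.2⟩, hcc⟩
          exact absurd (le_csSup hEbdd this) (not_le.mpr hτ.1)
        have hIcc : ∀ τ ∈ Set.Icc (0:ℝ) u, ξ τ ∈ Set.Icc a b := by
          intro τ hτ
          refine ⟨?_, hsb τ hτ.1⟩
          by_contra hcc; push_neg at hcc
          have := stay_neg hξc hξd hconst_a hξ0ge hτ.1 hcc u hτ.2
          linarith
        have hξu : ξ u = a := by
          refine le_antisymm ?_ hub
          have T : Filter.Tendsto ξ (nhdsWithin u (Set.Ioi u)) (nhds (ξ u)) :=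
            (hξc.continuousWithinAt (s := Set.Ioi u) (x := u)).tendsto
          refine le_of_tendsto T ?_
          exact Filter.eventually_of_mem (Ioc_mem_nhdsGT hult)
            (fun τ hτ => (hIoc τ hτ).le)
        have hsplit : (∫ τ in (0:ℝ)..u, g τ) + ∫ τ in u..s, g τ = ∫ τ in (0:ℝ)..s, g τ :=
          intervalIntegral.integral_add_adjacent_intervals (hg_int 0 u) (hg_int u s)
        have h1 : ∫ τ in (0:ℝ)..u, g τ = ξ u - α := by
          have he : ∫ τ in (0:ℝ)..u, g τ = ∫ τ in (0:ℝ)..u, bb (ξ τ) := by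
            apply intervalIntegral.integral_congr
            intro τ hτ
            rw [Set.uIcc_of_le hu0] at hτ
            rw [hg_def]; simp only [if_pos (hIcc τ hτ)]
          rw [he, ftc_sol hbbcont hξc hξd le_rfl hu0, hξ0]
        have h2 : ∫ τ in u..s, g τ = 0 := by
          rw [intervalIntegral.integral_of_le hult.le]
          have : ∫ τ in Set.Ioc u s, g τ = ∫ τ in Set.Ioc u s, (0:ℝ) := by
            apply MeasureTheory.setIntegral_congr_fun measurableSet_Ioc
            intro τ hτ
            rw [hg_def]
            exact if_neg (fun hmem => absurd hmem.1 (not_le.mpr (hIoc τ hτ)))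
          rw [this]; simp
        rw [clampI_of_gt hslt, ← hsplit, h1, h2, hξu]
        ring
  -- pointwise identity between the Skorokhod integrand and g
  have hpt : ∀ τ, v τ - l τ * bdryNormal a b (η τ) = g τ := by
    intro τ
    by_cases h1 : b < ξ τ
    · have hηa : η τ = b := clampI_of_lt hab' h1
      have hn : bdryNormal a b (η τ) = 1 := by
        rw [hηa]; unfold bdryNormal; rw [if_neg hab.ne', if_pos rfl]
      have hgv : g τ = 0 := by
        rw [hg_def]
        exact if_neg (fun hmem => absurd hmem.2 (not_le.mpr h1))
      rw [hv_def, hl_def, hgv, hn]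
      simp only [if_pos h1]
      ring
    · by_cases h2 : ξ τ < a
      · have hηa : η τ = a := clampI_of_gt h2
        have hn : bdryNormal a b (η τ) = -1 := by
          rw [hηa]; unfold bdryNormal; rw [if_pos rfl]
        have hgv : g τ = 0 := by
          rw [hg_def]
          exact if_neg (fun hmem => absurd hmem.1 (not_le.mpr h2))
        rw [hv_def, hl_def, hgv, hn]
        simp only [if_neg h1, if_pos h2]
        ring
      · have hmem : ξ τ ∈ Set.Icc a b := ⟨not_lt.mp h2, not_lt.mp h1⟩
        have hgv : g τ = bb (ξ τ) := by rw [hg_def]; exact if_pos hmem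
        rw [hv_def, hl_def, hgv]
        simp only [if_neg h1, if_neg h2]
        ring
  have hηmem : ∀ s, η s ∈ Set.Icc a b := fun s => hclamp_mem _
  have hlagzero : (fun s => Lag1 Φp Φm (η s) (v s)) = fun _ => (0:ℝ) := by
    funext s
    have h1 : η s ∈ Set.Icc a b := hηmem s
    have h2 : v s = Φp (η s) - Φm (η s) := rfl
    rw [h2]
    exact lag_drift_eq_zero (le_trans hc0.le (hΦp _ h1)) (le_trans hc0.le (hΦm _ h1))
  refine ⟨η, v, l, ?_, ⟨?_, fun s _ => hηmem s, ?_, ?_, ?_, ?_⟩, ?_, ?_⟩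
  · exact ((hbbcont.comp hξc).locallyIntegrable).locallyIntegrableOn _
  · show clampI a b (ξ 0) = α
    rw [hξ0]; exact clampI_eq_self hα
  · have hlmeas : Measurable l := by
      apply Measurable.ite (measurableSet_lt measurable_const hξc.measurable)
        (hbbcont.comp hξc).measurable
      exact Measurable.ite (measurableSet_lt hξc.measurable measurable_const)
        ((hbbcont.comp hξc).measurable.neg) measurable_const
    have hbound : ∀ x, ‖l x‖ ≤ |bb (ξ x)| := by
      intro x; rw [hl_def]; simp only [Real.norm_eq_abs]
      split_ifs <;> simp [abs_nonneg]
    exact (locallyIntegrable_of_bound hlmeas ((hbbcont.comp hξc).abs) hbound).locallyIntegrableOn _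
  · refine MeasureTheory.ae_restrict_of_forall_mem measurableSet_Ici ?_
    intro s hs
    rw [hl_def]
    by_cases h1 : b < ξ s
    · simp only [if_pos h1]
      rw [hconst_b _ h1]
      exact (escape_pos hξc hξd hconst_b hξ0le hs h1).le
    · by_cases h2 : ξ s < a
      · simp only [if_neg h1, if_pos h2]
        rw [hconst_a _ h2]
        have := escape_neg hξc hξd hconst_a hξ0ge hs h2
        linarith
      · simp only [if_neg h1, if_neg h2]; exact le_rfl
  · intro s hs
    have hrw : (fun τ => v τ - l τ * bdryNormal a b (η τ)) = g := funext hpt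
    show clampI a b (ξ s) = α + ∫ τ in (0:ℝ)..s, (v τ - l τ * bdryNormal a b (η τ))
    calc clampI a b (ξ s) = α + ∫ τ in (0:ℝ)..s, g τ := hkey s hs
      _ = α + ∫ τ in (0:ℝ)..s, (v τ - l τ * bdryNormal a b (η τ)) := by rw [hrw]
  · refine MeasureTheory.ae_restrict_of_forall_mem measurableSet_Ici ?_
    intro s _ hmem
    rw [hl_def]
    by_cases h1 : b < ξ s
    · exfalso
      have : η s = b := clampI_of_lt hab' h1
      rw [this] at hmem
      exact lt_irrefl b hmem.2
    · by_cases h2 : ξ s < a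
      · exfalso
        have : η s = a := clampI_of_gt h2
        rw [this] at hmem
        exact lt_irrefl a hmem.1
      · simp only [if_neg h1, if_neg h2]
  · rw [hlagzero]; exact intervalIntegrable_const
  · rw [hlagzero]; simp



lemma sq_setIntegral {G : ℝ → ℝ} {s : ℝ} (hs : 0 ≤ s)
    (hG : IntegrableOn G (Set.Ioc 0 s) volume) :
    (∫ τ in Set.Ioc 0 s, G τ) ^ 2
      = 2 * ∫ w in Set.Ioc 0 s, (G w * ∫ u in Set.Ioc 0 w, G u) := by
  set μ := volume.restrict (Set.Ioc 0 s) with hμ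
  have hGμ : Integrable G μ := hG
  set H : ℝ × ℝ → ℝ := fun p => if p.1 ≤ p.2 then G p.1 * G p.2 else 0 with hH_def
  set H' : ℝ × ℝ → ℝ := fun p => if p.2 < p.1 then G p.1 * G p.2 else 0 with hH'_def
  have hprod : Integrable (fun p : ℝ × ℝ => G p.1 * G p.2) (μ.prod μ) :=
    hGμ.mul_prod hGμ
  have hA : MeasurableSet {p : ℝ × ℝ | p.1 ≤ p.2} :=
    measurableSet_le measurable_fst measurable_snd
  have hHind : H = Set.indicator {p : ℝ × ℝ | p.1 ≤ p.2} (fun p => G p.1 * G p.2) := by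
    funext p
    rw [Set.indicator_apply]
    rfl
  have hH'ind : H' = Set.indicator {p : ℝ × ℝ | p.1 ≤ p.2}ᶜ (fun p => G p.1 * G p.2) := by
    funext p
    rw [Set.indicator_apply]
    have : p ∈ {p : ℝ × ℝ | p.1 ≤ p.2}ᶜ ↔ p.2 < p.1 := by
      simp [Set.mem_compl_iff, not_le]
    by_cases h : p.2 < p.1
    · rw [if_pos (this.mpr h)]; exact if_pos h
    · rw [if_neg (fun hc => h (this.mp hc))]; exact if_neg h
  have hHint : Integrable H (μ.prod μ) := by rw [hHind]; exact hprod.indicator hA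
  have hH'int : Integrable H' (μ.prod μ) := by rw [hH'ind]; exact hprod.indicator hA.compl
  have hsum : (fun p : ℝ × ℝ => G p.1 * G p.2) = fun p => H p + H' p := by
    funext p
    by_cases h : p.1 ≤ p.2
    · simp [hH_def, hH'_def, h, not_lt.mpr h]
    · simp [hH_def, hH'_def, h, lt_of_not_ge h]
  have step1 : ∫ p : ℝ × ℝ, G p.1 * G p.2 ∂(μ.prod μ) = (∫ τ, G τ ∂μ) ^ 2 := by
    rw [integral_prod_mul]; ring
  have step2 : ∫ p : ℝ × ℝ, G p.1 * G p.2 ∂(μ.prod μ)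
      = (∫ p, H p ∂(μ.prod μ)) + ∫ p, H' p ∂(μ.prod μ) := by
    rw [hsum]
    exact integral_add hHint hH'int
  -- inner set computations
  have hIic : ∀ w ∈ Set.Ioc (0:ℝ) s, Set.Iic w ∩ Set.Ioc 0 s = Set.Ioc 0 w := by
    intro w hw
    ext x
    simp only [Set.mem_inter_iff, Set.mem_Iic, Set.mem_Ioc]
    constructor
    · rintro ⟨h1, h2, h3⟩; exact ⟨h2, h1⟩
    · rintro ⟨h1, h2⟩; exact ⟨h2, h1, le_trans h2 hw.2⟩
  have hIio : ∀ u ∈ Set.Ioc (0:ℝ) s, Set.Iio u ∩ Set.Ioc 0 s = Set.Ioo 0 u := by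
    intro u hu
    ext x
    simp only [Set.mem_inter_iff, Set.mem_Iio, Set.mem_Ioo, Set.mem_Ioc]
    constructor
    · rintro ⟨h1, h2, h3⟩; exact ⟨h2, h1⟩
    · rintro ⟨h1, h2⟩; exact ⟨h2, h1, le_trans h2.le hu.2⟩
  have step3 : ∫ p, H p ∂(μ.prod μ) = ∫ w in Set.Ioc 0 s, (G w * ∫ u in Set.Ioc 0 w, G u) := by
    rw [integral_prod_symm _ hHint]
    refine integral_congr_ae ?_
    filter_upwards [ae_restrict_mem measurableSet_Ioc] with w hw
    have h1 : (fun u => H (u, w)) = fun u => (Set.indicator (Set.Iic w) G u) * G w := by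
      funext u
      rw [Set.indicator_apply]
      by_cases h : u ≤ w
      · rw [hH_def]; simp [h]
      · rw [hH_def]; simp [h]
    rw [h1, integral_mul_const, integral_indicator measurableSet_Iic]
    have h2 : ∫ u in Set.Iic w, G u ∂μ = ∫ u in Set.Ioc 0 w, G u := by
      rw [hμ, Measure.restrict_restrict measurableSet_Iic, hIic w hw]
    rw [h2]; ring
  have step4 : ∫ p, H' p ∂(μ.prod μ) = ∫ u in Set.Ioc 0 s, (G u * ∫ w in Set.Ioc 0 u, G w) := by
    rw [integral_prod _ hH'int]
    refine integral_congr_ae ?_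
    filter_upwards [ae_restrict_mem measurableSet_Ioc] with u hu
    have h1 : (fun w => H' (u, w)) = fun w => G u * (Set.indicator (Set.Iio u) G w) := by
      funext w
      rw [Set.indicator_apply]
      by_cases h : w < u
      · rw [hH'_def]; simp [h]
      · rw [hH'_def]; simp [h]
    rw [h1, integral_const_mul, integral_indicator measurableSet_Iio]
    have h2 : ∫ w in Set.Iio u, G w ∂μ = ∫ w in Set.Ioc 0 u, G w := by
      rw [hμ, Measure.restrict_restrict measurableSet_Iio, hIio u hu]
      exact setIntegral_congr_set Ioo_ae_eq_Ioc
    rw [h2]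
  have final : (∫ τ, G τ ∂μ) ^ 2
      = (∫ w in Set.Ioc 0 s, (G w * ∫ u in Set.Ioc 0 w, G u))
        + (∫ w in Set.Ioc 0 s, (G w * ∫ u in Set.Ioc 0 w, G u)) := by
    rw [← step1, step2, step3, step4]
  have hgoal : (∫ τ in Set.Ioc 0 s, G τ) = ∫ τ, G τ ∂μ := by rw [hμ]
  rw [hgoal]
  linarith [final]

lemma bdryNormal_meas (a b : ℝ) : Measurable (bdryNormal a b) := by
  unfold bdryNormal
  refine Measurable.ite ?_ measurable_const (Measurable.ite ?_ measurable_const measurable_const)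
  · rw [Set.setOf_eq_eq_singleton]; exact measurableSet_singleton a
  · rw [Set.setOf_eq_eq_singleton]; exact measurableSet_singleton b

lemma skorokhod_F_int
    {a b α : ℝ} {v η l : ℝ → ℝ}
    (hv : MeasureTheory.LocallyIntegrableOn v (Set.Ici 0) MeasureTheory.volume)
    (hl : MeasureTheory.LocallyIntegrableOn l (Set.Ici 0) MeasureTheory.volume)
    (hid : ∀ s ∈ Set.Ici (0:ℝ),
      η s = α + ∫ τ in (0:ℝ)..s, (v τ - l τ * bdryNormal a b (η τ)))
    {T : ℝ} (hT : 0 ≤ T) :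
    MeasureTheory.IntegrableOn
      (fun τ => v τ - l τ * bdryNormal a b (η τ)) (Set.Ioc 0 T) MeasureTheory.volume := by
  set F : ℝ → ℝ := fun τ => v τ - l τ * bdryNormal a b (η τ) with hF
  have hvl : ∀ x y : ℝ, 0 ≤ x →
      IntegrableOn v (Set.Ioc x y) volume ∧ IntegrableOn l (Set.Ioc x y) volume := by
    intro x y hx
    constructor
    · exact (hv.integrableOn_compact_subset
        (Set.Icc_subset_Ici_self.trans (Set.Ici_subset_Ici.mpr hx) : Set.Icc x y ⊆ Set.Ici 0)
        isCompact_Icc).mono_set Set.Ioc_subset_Icc_self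
    · exact (hl.integrableOn_compact_subset
        (Set.Icc_subset_Ici_self.trans (Set.Ici_subset_Ici.mpr hx) : Set.Icc x y ⊆ Set.Ici 0)
        isCompact_Icc).mono_set Set.Ioc_subset_Icc_self
  have hdomf : ∀ x y : ℝ, 0 ≤ x → IntegrableOn (fun τ => |v τ| + |l τ|) (Set.Ioc x y) volume :=
    fun x y hx => ((hvl x y hx).1.abs).add ((hvl x y hx).2.abs)
  have hdom : ∀ τ, ‖F τ‖ ≤ |v τ| + |l τ| := by
    intro τ
    have h1 : |bdryNormal a b (η τ)| ≤ 1 := abs_bdryNormal_le a b (η τ)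
    rw [hF]
    simp only [Real.norm_eq_abs]
    calc |v τ - l τ * bdryNormal a b (η τ)|
        ≤ |v τ| + |l τ * bdryNormal a b (η τ)| := abs_sub _ _
      _ = |v τ| + |l τ| * |bdryNormal a b (η τ)| := by rw [abs_mul]
      _ ≤ |v τ| + |l τ| * 1 := by
          have := mul_le_mul_of_nonneg_left h1 (abs_nonneg (l τ))
          linarith
      _ = |v τ| + |l τ| := by ring
  set S := {s : ℝ | 0 ≤ s ∧ IntegrableOn F (Set.Ioc 0 s) volume} with hS
  have hS0 : (0:ℝ) ∈ S := ⟨le_rfl, by simp [IntegrableOn]⟩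
  have hSdc : ∀ s ∈ S, ∀ x, 0 ≤ x → x ≤ s → x ∈ S := fun s hs x hx hxs =>
    ⟨hx, hs.2.mono_set (Set.Ioc_subset_Ioc le_rfl hxs)⟩
  have hout : ∀ τ, 0 ≤ τ → τ ∉ S → η τ = α := by
    intro τ hτ hτS
    have h1 : ¬ IntervalIntegrable F volume 0 τ := by
      intro hc
      exact hτS ⟨hτ, (intervalIntegrable_iff_integrableOn_Ioc_of_le hτ).mp hc⟩
    have h2 := hid τ hτ
    rw [intervalIntegral.integral_undef h1] at h2
    simpa using h2
  rcases eq_or_lt_of_le hT with h0 | hTpos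
  · rw [← h0]; simpa using hS0.2
  set u := sSup (S ∩ Set.Icc 0 T) with hu
  have hne : (S ∩ Set.Icc 0 T).Nonempty := ⟨0, hS0, le_rfl, hT⟩
  have hbdd : BddAbove (S ∩ Set.Icc 0 T) := ⟨T, fun x hx => hx.2.2⟩
  have hu0 : 0 ≤ u := le_csSup hbdd ⟨hS0, le_rfl, hT⟩
  have huT : u ≤ T := csSup_le hne (fun x hx => hx.2.2)
  -- η is continuous on Icc 0 x for x ∈ S
  have hηcont : ∀ x ∈ S, ContinuousOn η (Set.Icc 0 x) := by
    intro x hx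
    have hint : IntegrableOn F (Set.Icc 0 x) volume := by
      rw [integrableOn_Icc_iff_integrableOn_Ioc]
      exact hx.2
    have hc := intervalIntegral.continuousOn_primitive (f := F) (a := 0) (b := x)
      (μ := volume) hint
    have heq : ∀ y ∈ Set.Icc (0:ℝ) x, η y = α + ∫ τ in Set.Ioc 0 y, F τ := by
      intro y hy
      rw [hid y hy.1, intervalIntegral.integral_of_le hy.1]
    exact ContinuousOn.congr (continuousOn_const.add hc) heq
  -- η is continuous on Ico 0 u
  have hηIco : ContinuousOn η (Set.Ico 0 u) := by
    intro τ hτ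
    obtain ⟨x, hxmem, hx⟩ := exists_lt_of_lt_csSup hne hτ.2
    have h1 : ContinuousWithinAt η (Set.Icc 0 x) τ :=
      hηcont x hxmem.1 τ ⟨hτ.1, hx.le⟩
    have h2 : ContinuousWithinAt η (Set.Ico 0 u ∩ Set.Iio x) τ :=
      h1.mono (fun y hy => ⟨hy.1.1, hy.2.le⟩)
    exact (continuousWithinAt_inter (Iio_mem_nhds hx)).mp h2
  have hηmeasIoc : AEMeasurable η (volume.restrict (Set.Ioc 0 u)) := by
    have h1 : AEMeasurable η (volume.restrict (Set.Ico 0 u)) :=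
      hηIco.aemeasurable measurableSet_Ico
    rwa [Measure.restrict_congr_set ((Ioo_ae_eq_Ioc).symm.trans Ioo_ae_eq_Ico)]
  have hFaesm_u : AEStronglyMeasurable F (volume.restrict (Set.Ioc 0 u)) := by
    have hvm : AEStronglyMeasurable v (volume.restrict (Set.Ioc 0 u)) :=
      ((hvl 0 u le_rfl).1).aestronglyMeasurable
    have hlm : AEStronglyMeasurable l (volume.restrict (Set.Ioc 0 u)) :=
      ((hvl 0 u le_rfl).2).aestronglyMeasurable
    have hnm : AEStronglyMeasurable (fun τ => bdryNormal a b (η τ))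
        (volume.restrict (Set.Ioc 0 u)) :=
      ((bdryNormal_meas a b).comp_aemeasurable hηmeasIoc).aestronglyMeasurable
    exact hvm.sub (hlm.mul hnm)
  have huS : u ∈ S :=
    ⟨hu0, (hdomf 0 u le_rfl).mono' hFaesm_u (Filter.Eventually.of_forall hdom)⟩
  rcases eq_or_lt_of_le huT with hEq | hLt
  · rw [hEq] at huS; exact huS.2
  · have hIocT : ∀ τ ∈ Set.Ioc u T, η τ = α := by
      intro τ hτ
      refine hout τ (le_trans hu0 hτ.1.le) ?_
      intro hτS
      have : τ ≤ u := le_csSup hbdd ⟨hτS, le_trans hu0 hτ.1.le, hτ.2⟩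
      exact absurd this (not_le.mpr hτ.1)
    have hFaesm2 : AEStronglyMeasurable F (volume.restrict (Set.Ioc u T)) := by
      have hG : AEStronglyMeasurable (fun τ => v τ - l τ * bdryNormal a b α)
          (volume.restrict (Set.Ioc u T)) :=
        ((hvl u T hu0).1.aestronglyMeasurable).sub
          (((hvl u T hu0).2.aestronglyMeasurable).mul aestronglyMeasurable_const)
      refine hG.congr ?_
      refine MeasureTheory.ae_restrict_of_forall_mem measurableSet_Ioc ?_
      intro τ hτ
      rw [hF]
      simp only [hIocT τ hτ]
    have h2 : IntegrableOn F (Set.Ioc u T) volume :=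
      (hdomf u T hu0).mono' hFaesm2 (Filter.Eventually.of_forall hdom)
    have h3 := huS.2.union h2
    rwa [Set.Ioc_union_Ioc_eq_Ioc hu0 huT] at h3



set_option maxHeartbeats 2000000 in
lemma zero_action_unique
    (a b : ℝ) (hab : a < b)
    (Φp Φm : ℝ → ℝ) (Kp Km : NNReal)
    (hΦpLip : LipschitzOnWith Kp Φp (Set.Icc a b))
    (hΦmLip : LipschitzOnWith Km Φm (Set.Icc a b))
    (c0 : ℝ) (hc0 : 0 < c0)
    (hΦp : ∀ x ∈ Set.Icc a b, c0 ≤ Φp x)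
    (hΦm : ∀ x ∈ Set.Icc a b, c0 ≤ Φm x)
    (t : ℝ) (ht : 0 < t)
    (α : ℝ) (hα : α ∈ Set.Icc a b)
    (η v l η' v' l' : ℝ → ℝ)
    (hv : MeasureTheory.LocallyIntegrableOn v (Set.Ici 0) MeasureTheory.volume)
    (hsk : SkorokhodSol a b α v η l)
    (hLi : IntervalIntegrable (fun s => Lag1 Φp Φm (η s) (v s)) MeasureTheory.volume 0 t)
    (hL0 : (∫ s in (0:ℝ)..t, Lag1 Φp Φm (η s) (v s)) = 0)
    (hv' : MeasureTheory.LocallyIntegrableOn v' (Set.Ici 0) MeasureTheory.volume)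
    (hsk' : SkorokhodSol a b α v' η' l')
    (hLi' : IntervalIntegrable (fun s => Lag1 Φp Φm (η' s) (v' s)) MeasureTheory.volume 0 t)
    (hL0' : (∫ s in (0:ℝ)..t, Lag1 Φp Φm (η' s) (v' s)) = 0) :
    ∀ s ∈ Set.Icc (0:ℝ) t, η s = η' s := by
  obtain ⟨hη0, hηmem, hlint, hlpos, hid, hl0i⟩ := hsk
  obtain ⟨hη0', hηmem', hlint', hlpos', hid', hl0i'⟩ := hsk'
  set Kr : ℝ := (Kp:ℝ) + (Km:ℝ) with hKr
  have hKr0 : 0 ≤ Kr := by positivity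
  set F : ℝ → ℝ := fun τ => v τ - l τ * bdryNormal a b (η τ) with hF
  set F' : ℝ → ℝ := fun τ => v' τ - l' τ * bdryNormal a b (η' τ) with hF'
  have hFint : ∀ x : ℝ, 0 ≤ x → IntegrableOn F (Set.Ioc 0 x) volume :=
    fun x hx => skorokhod_F_int hv hlint hid hx
  have hFint' : ∀ x : ℝ, 0 ≤ x → IntegrableOn F' (Set.Ioc 0 x) volume :=
    fun x hx => skorokhod_F_int hv' hlint' hid' hx
  set G : ℝ → ℝ := fun τ => F τ - F' τ with hG
  have hGint : ∀ x : ℝ, 0 ≤ x → IntegrableOn G (Set.Ioc 0 x) volume :=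
    fun x hx => (hFint x hx).sub (hFint' x hx)
  set P : ℝ → ℝ := fun s => ∫ τ in Set.Ioc 0 s, G τ with hP
  have hPval : ∀ w : ℝ, P w = ∫ u in Set.Ioc 0 w, G u := fun w => by rw [hP]
  have hDP : ∀ s : ℝ, 0 ≤ s → η s - η' s = P s := by
    intro s hs
    have h1 : IntervalIntegrable F volume 0 s :=
      (intervalIntegrable_iff_integrableOn_Ioc_of_le hs).mpr (hFint s hs)
    have h2 : IntervalIntegrable F' volume 0 s :=
      (intervalIntegrable_iff_integrableOn_Ioc_of_le hs).mpr (hFint' s hs)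
    have h3 : ∫ τ in (0:ℝ)..s, G τ
        = (∫ τ in (0:ℝ)..s, F τ) - ∫ τ in (0:ℝ)..s, F' τ := by
      rw [hG]; exact intervalIntegral.integral_sub h1 h2
    rw [hid s hs, hid' s hs, hPval s]
    calc (α + ∫ τ in (0:ℝ)..s, F τ) - (α + ∫ τ in (0:ℝ)..s, F' τ)
        = (∫ τ in (0:ℝ)..s, F τ) - ∫ τ in (0:ℝ)..s, F' τ := by ring
      _ = ∫ τ in (0:ℝ)..s, G τ := h3.symm
      _ = ∫ τ in Set.Ioc 0 s, G τ := intervalIntegral.integral_of_le hs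
  have hPc : ContinuousOn P (Set.Icc 0 t) := by
    have h1 : IntegrableOn G (Set.Icc 0 t) volume :=
      (integrableOn_Icc_iff_integrableOn_Ioc (f := G)).mpr (hGint t ht.le)
    exact intervalIntegral.continuousOn_primitive h1
  obtain ⟨CP, hCP⟩ := (isCompact_Icc (a := (0:ℝ)) (b := t)).exists_bound_of_continuousOn hPc
  -- a.e. velocity identities from the zero-action conditions
  have hvel : ∀ᵐ τ ∂(volume.restrict (Set.Ioc 0 t)), v τ = Φp (η τ) - Φm (η τ) := by
    have hnn : ∀ τ ∈ Set.Ioc (0:ℝ) t, 0 ≤ Lag1 Φp Φm (η τ) (v τ) := by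
      intro τ hτ
      have hm := hηmem τ (le_of_lt hτ.1)
      exact lag_nonneg hc0 (hΦp _ hm) (hΦm _ hm) _
    have hint : Integrable (fun τ => Lag1 Φp Φm (η τ) (v τ)) (volume.restrict (Set.Ioc 0 t)) :=
      (intervalIntegrable_iff_integrableOn_Ioc_of_le ht.le).mp hLi
    have h0' : ∫ τ in Set.Ioc 0 t, Lag1 Φp Φm (η τ) (v τ) = 0 := by
      rw [← intervalIntegral.integral_of_le ht.le]; exact hL0
    have hz := (MeasureTheory.integral_eq_zero_iff_of_nonneg_ae
      (MeasureTheory.ae_restrict_of_forall_mem measurableSet_Ioc hnn) hint).mp h0'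
    filter_upwards [hz, MeasureTheory.ae_restrict_mem measurableSet_Ioc] with τ h1 h2
    have hm := hηmem τ (le_of_lt h2.1)
    exact lag_eq_zero_imp hc0 (hΦp _ hm) (hΦm _ hm) h1
  have hvel' : ∀ᵐ τ ∂(volume.restrict (Set.Ioc 0 t)), v' τ = Φp (η' τ) - Φm (η' τ) := by
    have hnn : ∀ τ ∈ Set.Ioc (0:ℝ) t, 0 ≤ Lag1 Φp Φm (η' τ) (v' τ) := by
      intro τ hτ
      have hm := hηmem' τ (le_of_lt hτ.1)
      exact lag_nonneg hc0 (hΦp _ hm) (hΦm _ hm) _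
    have hint : Integrable (fun τ => Lag1 Φp Φm (η' τ) (v' τ)) (volume.restrict (Set.Ioc 0 t)) :=
      (intervalIntegrable_iff_integrableOn_Ioc_of_le ht.le).mp hLi'
    have h0' : ∫ τ in Set.Ioc 0 t, Lag1 Φp Φm (η' τ) (v' τ) = 0 := by
      rw [← intervalIntegral.integral_of_le ht.le]; exact hL0'
    have hz := (MeasureTheory.integral_eq_zero_iff_of_nonneg_ae
      (MeasureTheory.ae_restrict_of_forall_mem measurableSet_Ioc hnn) hint).mp h0'
    filter_upwards [hz, MeasureTheory.ae_restrict_mem measurableSet_Ioc] with τ h1 h2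
    have hm := hηmem' τ (le_of_lt h2.1)
    exact lag_eq_zero_imp hc0 (hΦp _ hm) (hΦm _ hm) h1
  have hsub : Set.Ioc (0:ℝ) t ⊆ Set.Ici 0 := fun x hx => le_of_lt hx.1
  have hlpos2 : ∀ᵐ τ ∂(volume.restrict (Set.Ioc 0 t)), 0 ≤ l τ :=
    MeasureTheory.ae_restrict_of_ae_restrict_of_subset hsub hlpos
  have hlpos2' : ∀ᵐ τ ∂(volume.restrict (Set.Ioc 0 t)), 0 ≤ l' τ :=
    MeasureTheory.ae_restrict_of_ae_restrict_of_subset hsub hlpos'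
  have hl02 : ∀ᵐ τ ∂(volume.restrict (Set.Ioc 0 t)), η τ ∈ Set.Ioo a b → l τ = 0 :=
    MeasureTheory.ae_restrict_of_ae_restrict_of_subset hsub hl0i
  have hl02' : ∀ᵐ τ ∂(volume.restrict (Set.Ioc 0 t)), η' τ ∈ Set.Ioo a b → l' τ = 0 :=
    MeasureTheory.ae_restrict_of_ae_restrict_of_subset hsub hl0i'
  -- key pointwise inequality, a.e.
  have hkey : ∀ᵐ τ ∂(volume.restrict (Set.Ioc 0 t)), G τ * P τ ≤ Kr * P τ ^ 2 := by
    filter_upwards [hvel, hvel', hlpos2, hlpos2', hl02, hl02',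
      MeasureTheory.ae_restrict_mem measurableSet_Ioc] with τ h1 h2 h3 h4 h5 h6 hmem
    have hm : η τ ∈ Set.Icc a b := hηmem τ (le_of_lt hmem.1)
    have hm' : η' τ ∈ Set.Icc a b := hηmem' τ (le_of_lt hmem.1)
    have hPD : P τ = η τ - η' τ := (hDP τ (le_of_lt hmem.1)).symm
    set D : ℝ := η τ - η' τ with hD
    have hA : |Φp (η τ) - Φm (η τ) - (Φp (η' τ) - Φm (η' τ))| ≤ Kr * |D| := by
      have d1 : |Φp (η τ) - Φp (η' τ)| ≤ (Kp:ℝ) * |D| := by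
        have h := hΦpLip.dist_le_mul _ hm _ hm'
        rw [Real.dist_eq, Real.dist_eq] at h
        exact h
      have d2 : |Φm (η τ) - Φm (η' τ)| ≤ (Km:ℝ) * |D| := by
        have h := hΦmLip.dist_le_mul _ hm _ hm'
        rw [Real.dist_eq, Real.dist_eq] at h
        exact h
      calc |Φp (η τ) - Φm (η τ) - (Φp (η' τ) - Φm (η' τ))|
          = |(Φp (η τ) - Φp (η' τ)) - (Φm (η τ) - Φm (η' τ))| := by ring_nf
        _ ≤ |Φp (η τ) - Φp (η' τ)| + |Φm (η τ) - Φm (η' τ)| := abs_sub _ _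
        _ ≤ Kr * |D| := by rw [hKr]; linarith
    have hB1 : 0 ≤ l τ * bdryNormal a b (η τ) * D := by
      rcases eq_or_lt_of_le hm.1 with hEq | hGt
      · have hn : bdryNormal a b (η τ) = -1 := by
          rw [← hEq]; unfold bdryNormal; rw [if_pos rfl]
        have hDle : D ≤ 0 := by rw [hD, ← hEq]; linarith [hm'.1]
        rw [hn]; nlinarith
      · rcases eq_or_lt_of_le hm.2 with hEq2 | hLt2
        · have hn : bdryNormal a b (η τ) = 1 := by
            rw [hEq2]; unfold bdryNormal; rw [if_neg hab.ne', if_pos rfl]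
          have hDge : 0 ≤ D := by rw [hD, hEq2]; linarith [hm'.2]
          rw [hn]; nlinarith
        · have hz : l τ = 0 := h5 ⟨hGt, hLt2⟩
          rw [hz]; ring_nf; exact le_rfl
    have hB2 : l' τ * bdryNormal a b (η' τ) * D ≤ 0 := by
      rcases eq_or_lt_of_le hm'.1 with hEq | hGt
      · have hn : bdryNormal a b (η' τ) = -1 := by
          rw [← hEq]; unfold bdryNormal; rw [if_pos rfl]
        have hDge : 0 ≤ D := by rw [hD, ← hEq]; linarith [hm.1]
        rw [hn]; nlinarith
      · rcases eq_or_lt_of_le hm'.2 with hEq2 | hLt2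
        · have hn : bdryNormal a b (η' τ) = 1 := by
            rw [hEq2]; unfold bdryNormal; rw [if_neg hab.ne', if_pos rfl]
          have hDle : D ≤ 0 := by rw [hD, hEq2]; linarith [hm.2]
          rw [hn]; nlinarith
        · have hz : l' τ = 0 := h6 ⟨hGt, hLt2⟩
          rw [hz]; ring_nf; exact le_rfl
    have hGval : G τ = (Φp (η τ) - Φm (η τ)) - (Φp (η' τ) - Φm (η' τ))
        - (l τ * bdryNormal a b (η τ) - l' τ * bdryNormal a b (η' τ)) := by
      simp only [hG, hF, hF']
      rw [h1, h2]; ring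
    rw [hPD, hGval]
    have habs : ((Φp (η τ) - Φm (η τ)) - (Φp (η' τ) - Φm (η' τ))) * D ≤ Kr * D ^ 2 := by
      have e1 := le_abs_self (((Φp (η τ) - Φm (η τ)) - (Φp (η' τ) - Φm (η' τ))) * D)
      have e2 := abs_mul ((Φp (η τ) - Φm (η τ)) - (Φp (η' τ) - Φm (η' τ))) D
      have e3 := sq_abs D
      nlinarith [abs_nonneg D, hA]
    nlinarith [hB1, hB2, habs]
  -- integral inequality for P²
  have hφle : ∀ s ∈ Set.Icc (0:ℝ) t, P s ^ 2 ≤ 2 * Kr * ∫ τ in Set.Ioc 0 s, P τ ^ 2 := by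
    intro s hs
    have hGs : IntegrableOn G (Set.Ioc 0 s) volume := hGint s hs.1
    have hsq := sq_setIntegral hs.1 hGs
    have hsub2 : Set.Ioc (0:ℝ) s ⊆ Set.Ioc 0 t := Set.Ioc_subset_Ioc le_rfl hs.2
    have e1 : (∫ w in Set.Ioc 0 s, (G w * ∫ u in Set.Ioc 0 w, G u))
        = ∫ w in Set.Ioc 0 s, G w * P w := by
      refine MeasureTheory.integral_congr_ae (Filter.Eventually.of_forall (fun w => ?_))
      simp only [hPval]
    have hkey_s : ∀ᵐ τ ∂(volume.restrict (Set.Ioc 0 s)), G τ * P τ ≤ Kr * P τ ^ 2 :=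
      MeasureTheory.ae_restrict_of_ae_restrict_of_subset hsub2 hkey
    have hPs_meas : AEStronglyMeasurable P (volume.restrict (Set.Ioc 0 s)) :=
      ((hPc.mono (fun y hy => ⟨le_of_lt hy.1, le_trans hy.2 hs.2⟩))).aestronglyMeasurable
        measurableSet_Ioc
    have hGP_int : IntegrableOn (fun τ => G τ * P τ) (Set.Ioc 0 s) volume := by
      refine Integrable.mono' (g := fun τ => |G τ| * (|CP| + 1))
        ((hGs.abs).mul_const _) (hGs.aestronglyMeasurable.mul hPs_meas) ?_
      refine MeasureTheory.ae_restrict_of_forall_mem measurableSet_Ioc (fun τ hτ => ?_)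
      have hb1 : ‖P τ‖ ≤ CP := hCP τ ⟨le_of_lt hτ.1, le_trans hτ.2 hs.2⟩
      rw [Real.norm_eq_abs] at hb1
      have hb2 : |P τ| ≤ |CP| + 1 := le_trans hb1 (by linarith [le_abs_self CP])
      rw [Real.norm_eq_abs, abs_mul]
      exact mul_le_mul_of_nonneg_left hb2 (abs_nonneg _)
    have hP2_int : IntegrableOn (fun τ => Kr * P τ ^ 2) (Set.Ioc 0 s) volume := by
      have hcc : ContinuousOn (fun τ => Kr * P τ ^ 2) (Set.Icc 0 s) :=
        continuousOn_const.mul ((hPc.mono (Set.Icc_subset_Icc le_rfl hs.2)).pow 2)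
      exact (hcc.integrableOn_compact isCompact_Icc).mono_set Set.Ioc_subset_Icc_self
    have hmono := MeasureTheory.integral_mono_ae hGP_int hP2_int hkey_s
    have e2 : ∫ τ in Set.Ioc 0 s, Kr * P τ ^ 2 = Kr * ∫ τ in Set.Ioc 0 s, P τ ^ 2 :=
      MeasureTheory.integral_const_mul _ _
    rw [e2] at hmono
    rw [hPval s, hsq, e1]
    linarith
  -- Gronwall argument
  set φ : ℝ → ℝ := fun τ => P τ ^ 2 with hφ
  have hφcont : ContinuousOn φ (Set.Icc 0 t) := hPc.pow 2
  have hφint : IntegrableOn φ (Set.Icc 0 t) volume :=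
    hφcont.integrableOn_compact isCompact_Icc
  set Q : ℝ → ℝ := fun s => ∫ τ in (0:ℝ)..s, φ τ with hQ
  have hQc : ContinuousOn Q (Set.Icc 0 t) := by
    have h1 := intervalIntegral.continuousOn_primitive (f := φ) (a := 0) (b := t)
      (μ := volume) hφint
    refine ContinuousOn.congr h1 ?_
    intro x hx
    rw [hQ]
    exact intervalIntegral.integral_of_le hx.1
  have hφIntInt : ∀ x ∈ Set.Icc (0:ℝ) t, IntervalIntegrable φ volume 0 x := by
    intro x hx
    refine (intervalIntegrable_iff_integrableOn_Ioc_of_le hx.1).mpr ?_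
    exact hφint.mono_set (fun y hy => ⟨le_of_lt hy.1, le_trans hy.2 hx.2⟩)
  have hQd : ∀ x ∈ Set.Ioo (0:ℝ) t, HasDerivAt Q (φ x) x := by
    intro x hx
    refine intervalIntegral.integral_hasDerivAt_right (hφIntInt x ⟨hx.1.le, hx.2.le⟩) ?_ ?_
    · exact ⟨Set.Ioo 0 t, Ioo_mem_nhds hx.1 hx.2,
        (hφcont.mono Set.Ioo_subset_Icc_self).aestronglyMeasurable measurableSet_Ioo⟩
    · exact (hφcont x ⟨hx.1.le, hx.2.le⟩).continuousAt (Icc_mem_nhds hx.1 hx.2)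
  set h : ℝ → ℝ := fun s => Q s * Real.exp (-(2*Kr) * s) with hh
  have hhd : ∀ x ∈ Set.Ioo (0:ℝ) t,
      HasDerivAt h ((φ x - 2*Kr*Q x) * Real.exp (-(2*Kr)*x)) x := by
    intro x hx
    have hi : HasDerivAt (fun s : ℝ => -(2*Kr) * s) (-(2*Kr)) x := by
      simpa using (hasDerivAt_id x).const_mul (-(2*Kr))
    have he := hi.exp
    have hprod := (hQd x hx).mul he
    rw [hh]
    refine hprod.congr_deriv ?_
    ring
  have hmono : AntitoneOn h (Set.Icc 0 t) := by
    refine antitoneOn_of_deriv_nonpos (convex_Icc 0 t) ?_ ?_ ?_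
    · exact hQc.mul (Real.continuous_exp.comp (continuous_const.mul continuous_id)).continuousOn
    · rw [interior_Icc]
      exact fun x hx => (hhd x hx).differentiableAt.differentiableWithinAt
    · rw [interior_Icc]
      intro x hx
      rw [(hhd x hx).deriv]
      have h2 := hφle x ⟨hx.1.le, hx.2.le⟩
      have h3 : ∫ τ in Set.Ioc 0 x, P τ ^ 2 = Q x := by
        rw [hQ]
        exact (intervalIntegral.integral_of_le hx.1.le).symm
      rw [h3] at h2
      have h4 : φ x ≤ 2*Kr*Q x := by
        show P x ^ 2 ≤ 2*Kr*Q x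
        linarith
      exact mul_nonpos_of_nonpos_of_nonneg (by linarith) (Real.exp_nonneg _)
  have hQ00 : Q 0 = 0 := by rw [hQ]; simp
  have hfinal : ∀ s ∈ Set.Icc (0:ℝ) t, P s = 0 := by
    intro s hs
    have hs0 : h s ≤ h 0 := hmono ⟨le_rfl, ht.le⟩ hs hs.1
    have hh0 : h 0 = 0 := by
      show Q 0 * Real.exp (-(2*Kr) * 0) = 0
      rw [hQ00]; simp
    rw [hh0] at hs0
    have hE := Real.exp_pos (-(2*Kr) * s)
    have hQle : Q s ≤ 0 := by
      have hs0' : Q s * Real.exp (-(2*Kr) * s) ≤ 0 := hs0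
      nlinarith
    have hQge : 0 ≤ Q s := by
      rw [hQ]
      refine intervalIntegral.integral_nonneg hs.1 (fun u hu => ?_)
      rw [hφ]; positivity
    have hQeq : Q s = 0 := le_antisymm hQle hQge
    have h2 := hφle s hs
    have h3 : ∫ τ in Set.Ioc 0 s, P τ ^ 2 = Q s := by
      rw [hQ]
      exact (intervalIntegral.integral_of_le hs.1).symm
    rw [h3, hQeq] at h2
    have h4 : P s ^ 2 = 0 := le_antisymm (by linarith) (sq_nonneg _)
    exact pow_eq_zero_iff (by norm_num : 2 ≠ 0) |>.mp h4
  intro s hs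
  have hD := hDP s hs.1
  rw [hfinal s hs] at hD
  linarith



/-- **Existence and uniqueness of the zero-action reflected path**: there is a
triple `(η, v, l)` solving the Skorokhod problem on `[a,b]` started from `α` with
zero action `∫₀ᵗ L̃(η, v) = 0`, and any two such zero-action triples have the same
path on `[0, t]`. -/
theorem zero_action_path_exists_unique
    (a b : ℝ) (hab : a < b)
    (Φp Φm : ℝ → ℝ) (Kp Km : NNReal)
    (hΦpLip : LipschitzOnWith Kp Φp (Set.Icc a b))
    (hΦmLip : LipschitzOnWith Km Φm (Set.Icc a b))
    (c0 : ℝ) (hc0 : 0 < c0)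
    (hΦp : ∀ α ∈ Set.Icc a b, c0 ≤ Φp α)
    (hΦm : ∀ α ∈ Set.Icc a b, c0 ≤ Φm α)
    (t : ℝ) (ht : 0 < t) (α : ℝ) (hα : α ∈ Set.Icc a b) :
    (∃ η v l : ℝ → ℝ,
      MeasureTheory.LocallyIntegrableOn v (Set.Ici 0) MeasureTheory.volume ∧
      SkorokhodSol a b α v η l ∧
      IntervalIntegrable (fun s => Lag1 Φp Φm (η s) (v s))
        MeasureTheory.volume 0 t ∧
      ∫ s in (0:ℝ)..t, Lag1 Φp Φm (η s) (v s) = 0) ∧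
    (∀ η v l η' v' l' : ℝ → ℝ,
      MeasureTheory.LocallyIntegrableOn v (Set.Ici 0) MeasureTheory.volume →
      SkorokhodSol a b α v η l →
      IntervalIntegrable (fun s => Lag1 Φp Φm (η s) (v s))
        MeasureTheory.volume 0 t →
      (∫ s in (0:ℝ)..t, Lag1 Φp Φm (η s) (v s)) = 0 →
      MeasureTheory.LocallyIntegrableOn v' (Set.Ici 0) MeasureTheory.volume →
      SkorokhodSol a b α v' η' l' →
      IntervalIntegrable (fun s => Lag1 Φp Φm (η' s) (v' s))
        MeasureTheory.volume 0 t →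
      (∫ s in (0:ℝ)..t, Lag1 Φp Φm (η' s) (v' s)) = 0 →
      ∀ s ∈ Set.Icc (0:ℝ) t, η s = η' s) := by
  constructor
  · exact zero_action_exists a b hab Φp Φm Kp Km hΦpLip hΦmLip c0 hc0 hΦp hΦm t ht α hα
  · intro η v l η' v' l' h1 h2 h3 h4 h5 h6 h7 h8
    exact zero_action_unique a b hab Φp Φm Kp Km hΦpLip hΦmLip c0 hc0 hΦp hΦm t ht α hα
      η v l η' v' l' h1 h2 h3 h4 h5 h6 h7 h8
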